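/- Assume the final-state observability inequality ∫₀ᵀ ‖B* U*_t q₀‖² dt ≥ K_T² ‖U*_T q₀‖² holds for all q₀ ∈ D(A*), where U is the C₀-semigroup generated by A and B is a bounded control operator. Then for every initial state y₀ there exists a control u ∈ L²(0,T;U) such that the mild solution y(t) = U_t y₀ + ∫₀ᵗ U_{t−s} B u(s) ds satisfies y(T) = 0. -/

import Mathlib

open Set MeasureTheory intervalIntegral Filter Topology TopologicalSpace

local notation "⟪" x ", " y "⟫" => @inner ℝ _ _ x y

section Pettis

/-- Rationals in `[0,T]` are dense in `[0,T]`. -/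
lemma dense_rat_Icc {T : ℝ} (hT : 0 < T) :
    ∀ s ∈ Icc (0:ℝ) T, s ∈ closure (Icc (0:ℝ) T ∩ range ((↑) : ℚ → ℝ)) := by
  intro s hs
  rw [Metric.mem_closure_iff]
  intro ε hε
  rcases lt_or_eq_of_le hs.2 with hlt | heq
  · obtain ⟨r, hr1, hr2⟩ := exists_rat_btwn (lt_min (by linarith : s < s + ε) hlt)
    refine ⟨r, ⟨⟨le_trans hs.1 hr1.le, (lt_min_iff.mp hr2).2.le⟩, ⟨r, rfl⟩⟩, ?_⟩
    rw [Real.dist_eq, abs_sub_comm, abs_of_nonneg (by linarith : (0:ℝ) ≤ (r:ℝ) - s)]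
    have := (lt_min_iff.mp hr2).1; linarith
  · obtain ⟨r, hr1, hr2⟩ := exists_rat_btwn (max_lt (by linarith : T - ε < T) hT)
    refine ⟨r, ⟨⟨(le_max_right _ _).trans hr1.le, hr2.le⟩, ⟨r, rfl⟩⟩, ?_⟩
    subst heq
    rw [Real.dist_eq, abs_of_nonneg (by linarith : (0:ℝ) ≤ s - r)]
    have := (le_max_left (s - ε) 0).trans_lt hr1
    linarith

/-- Pettis-type theorem: a weakly continuous function on `[0,T]` into a Hilbert space is
a.e. strongly measurable on `(0,T]`. -/
theorem pettis_aesm {E : Type*} [NormedAddCommGroup E] [InnerProductSpace ℝ E] [CompleteSpace E]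
    {T : ℝ} (hT : 0 < T) (f : ℝ → E)
    (hw : ∀ v : E, ContinuousOn (fun s => ⟪f s, v⟫) (Icc 0 T)) :
    AEStronglyMeasurable f (volume.restrict (Ioc 0 T)) := by
  classical
  set S : Set ℝ := Icc (0:ℝ) T ∩ range ((↑) : ℚ → ℝ) with hS
  have hScount : S.Countable := (Set.countable_range _).mono inter_subset_right
  have hSsub : S ⊆ Icc 0 T := inter_subset_left
  set Y : Submodule ℝ E := (Submodule.span ℝ (f '' S)).topologicalClosure with hY
  have hYsep : IsSeparable (Y : Set E) := by
    rw [hY, Submodule.topologicalClosure_coe]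
    exact (((hScount.image f).isSeparable).span).closure
  haveI : CompleteSpace Y := (Submodule.isClosed_topologicalClosure _).completeSpace_coe
  -- f maps [0,T] into Y
  have key : ∀ s ∈ Icc (0:ℝ) T, f s ∈ Y := by
    intro s hs
    set P : E := (Y.orthogonalProjectionOnto (f s) : E) with hP
    set w : E := f s - P with hwdef
    have hw_orth : w ∈ Yᗮ := Y.sub_starProjection_mem_orthogonal (f s)
    have hmemY : ∀ r ∈ S, f r ∈ Y := fun r hr =>
      Submodule.le_topologicalClosure _ (Submodule.subset_span (mem_image_of_mem f hr))
    have hzero : ∀ r ∈ S, ⟪f r, w⟫ = (0:ℝ) := fun r hr =>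
      (Submodule.mem_orthogonal Y w).mp hw_orth _ (hmemY r hr)
    have h1 : Tendsto (fun r => ⟪f r, w⟫) (𝓝[S] s) (𝓝 ⟪f s, w⟫) :=
      ((hw w) s hs).mono hSsub
    have h2 : Tendsto (fun r => ⟪f r, w⟫) (𝓝[S] s) (𝓝 (0:ℝ)) := by
      refine tendsto_const_nhds.congr' ?_
      filter_upwards [eventually_mem_nhdsWithin] with r hr
      exact (hzero r hr).symm
    haveI hne : (𝓝[S] s).NeBot := mem_closure_iff_nhdsWithin_neBot.mp (dense_rat_Icc hT s hs)
    have h0 : ⟪f s, w⟫ = (0:ℝ) := tendsto_nhds_unique h1 h2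
    have hPw : ⟪P, w⟫ = (0:ℝ) := (Submodule.mem_orthogonal Y w).mp hw_orth _ (by simp [hP])
    have hww : ⟪w, w⟫ = (0:ℝ) := by
      have : w = f s - P := hwdef
      rw [this, inner_sub_left, h0, hPw, sub_zero]
    have hw0 : w = 0 := by rwa [inner_self_eq_zero] at hww
    have : f s = P := by
      have h := hwdef.symm; rw [hw0] at h
      exact sub_eq_zero.mp h
    rw [this]
    exact SetLike.coe_mem _
  -- Y is a separable Hilbert space; take a Hilbert basis of it
  haveI : SeparableSpace Y := hYsep.separableSpace
  obtain ⟨w, b, hb⟩ := exists_hilbertBasis ℝ Y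
  have honb : Orthonormal ℝ ((↑) : w → Y) := by
    have := b.orthonormal
    rwa [hb] at this
  -- w is countable
  haveI hwcount : Countable w := by
    apply Pairwise.countable_of_isOpen_disjoint
      (s := fun i : w => Metric.ball (i : Y) (2⁻¹ : ℝ))
    · intro i j hij
      apply Metric.ball_disjoint_ball
      have hdist : dist (i : Y) (j : Y) ^ 2 = 2 := by
        rw [dist_eq_norm, norm_sub_sq_real, honb.1 i, honb.1 j,
          honb.2 hij]
        norm_num
      nlinarith [dist_nonneg (x := (i : Y)) (y := (j : Y))]
    · exact fun i => Metric.isOpen_ball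
    · exact fun i => ⟨i, by simp⟩
  haveI : Encodable w := Encodable.ofCountable w
  -- the terms of the basis expansion
  set term : w → ℝ → E := fun i s => ⟪((i : Y) : E), f s⟫ • ((i : Y) : E) with hterm
  have hsum : ∀ s ∈ Icc (0:ℝ) T, HasSum (fun i : w => term i s) (f s) := by
    intro s hs
    have h1 : HasSum (fun i : w => b.repr ⟨f s, key s hs⟩ i • (b : w → Y) i)
        (⟨f s, key s hs⟩ : Y) := b.hasSum_repr ⟨f s, key s hs⟩
    have h2 : HasSum (fun i : w => Y.subtypeL (b.repr ⟨f s, key s hs⟩ i • (b : w → Y) i))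
        (Y.subtypeL ⟨f s, key s hs⟩) := Y.subtypeL.hasSum h1
    convert h2 using 2 with i
    rw [hterm]
    have hbi : (b : w → Y) i = (i : Y) := congrFun hb i
    have hrepr : b.repr ⟨f s, key s hs⟩ i = ⟪(b : w → Y) i, (⟨f s, key s hs⟩ : Y)⟫ :=
      b.repr_apply_apply _ i
    simp only [hbi] at hrepr ⊢
    rw [hrepr, Submodule.coe_inner]
    rfl
    rfl
  -- reindex along ℕ
  set g : ℕ → ℝ → E := fun n s => ((Encodable.decode₂ w n).map (fun i => term i s)).getD 0
    with hg
  have hsumN : ∀ s ∈ Icc (0:ℝ) T,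
      Tendsto (fun n => ∑ k ∈ Finset.range n, g k s) atTop (𝓝 (f s)) := by
    intro s hs
    refine HasSum.tendsto_sum_nat ?_
    have hinj : Function.Injective (Encodable.encode : w → ℕ) := Encodable.encode_injective
    have hz : ∀ n ∉ range (Encodable.encode : w → ℕ), g n s = 0 := by
      intro n hn
      rw [hg]
      have : Encodable.decode₂ w n = none := by
        rcases h : Encodable.decode₂ w n with _ | i
        · rfl
        · exact absurd ⟨i, (Encodable.mem_decode₂.mp h)⟩ hn
      simp [this]
    have hcomp : (fun n => g n s) ∘ (Encodable.encode : w → ℕ) = fun i => term i s := by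
      funext i
      simp [hg, Encodable.decode₂_encode]
    rw [← hinj.hasSum_iff hz, hcomp]
    exact hsum s hs
  -- each g n is a.e. strongly measurable
  have hgm : ∀ n, AEStronglyMeasurable (g n) (volume.restrict (Ioc 0 T)) := by
    intro n
    rcases h : Encodable.decode₂ w n with _ | i
    · simp only [hg, h, Option.map_none, Option.getD_none]
      exact aestronglyMeasurable_const
    · simp only [hg, h, Option.map_some, Option.getD_some]
      have hc : ContinuousOn (fun s => ⟪f s, ((i : Y) : E)⟫) (Ioc 0 T) :=
        (hw _).mono Ioc_subset_Icc_self
      have hc' : ContinuousOn (fun s => ⟪((i : Y) : E), f s⟫) (Ioc 0 T) := by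
        refine hc.congr fun s _ => real_inner_comm _ _
      exact ((hc'.aestronglyMeasurable measurableSet_Ioc).smul aestronglyMeasurable_const)
  -- pass to the limit
  refine aestronglyMeasurable_of_tendsto_ae atTop
    (fun n => Finset.aestronglyMeasurable_sum (Finset.range n) fun k _ => hgm k) ?_
  rw [ae_restrict_iff' measurableSet_Ioc]
  exact ae_of_all _ fun s hs => by simpa only [Finset.sum_apply] using hsumN s (Ioc_subset_Icc_self hs)

end Pettis

set_option maxHeartbeats 1000000 in
/-- final-state observability of `(A*, B*)` implies null controllability:
for every `y₀` there is a control `u ∈ L²(0,T;U)` with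
`U_T y₀ + ∫₀ᵀ U_{T−s} B u(s) ds = 0`. -/
theorem stmt_8 {X U : Type*}
    [NormedAddCommGroup X] [InnerProductSpace ℝ X] [CompleteSpace X]
    [NormedAddCommGroup U] [InnerProductSpace ℝ U] [CompleteSpace U]
    (𝒰 : ℝ → X →L[ℝ] X)
    (h0 : 𝒰 0 = ContinuousLinearMap.id ℝ X)
    (hsemi : ∀ s t : ℝ, 0 ≤ s → 0 ≤ t → 𝒰 (s + t) = (𝒰 s).comp (𝒰 t))
    (hcont : ∀ x : X, ContinuousOn (fun t => 𝒰 t x) (Ici 0))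
    (B : U →L[ℝ] X)
    (D : Submodule ℝ X) (hD : Dense (D : Set X))
    (T K : ℝ) (hT : 0 < T) (hK : 0 < K)
    (hobs : ∀ q₀ ∈ D,
      K ^ 2 * ‖(ContinuousLinearMap.adjoint (𝒰 T)) q₀‖ ^ 2 ≤
        ∫ t in (0:ℝ)..T,
          ‖(ContinuousLinearMap.adjoint B)
            ((ContinuousLinearMap.adjoint (𝒰 t)) q₀)‖ ^ 2) :
    ∀ y₀ : X, ∃ u : ℝ → U,
      MemLp u 2 (volume.restrict (Ioc 0 T)) ∧
      IntervalIntegrable (fun s => (𝒰 (T - s)) (B (u s))) volume 0 T ∧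
      (𝒰 T) y₀ + ∫ s in (0:ℝ)..T, (𝒰 (T - s)) (B (u s)) = 0 := by
  classical
  set μ : Measure ℝ := volume.restrict (Ioc 0 T) with hμ
  haveI : IsFiniteMeasure μ := by
    constructor
    rw [hμ, Measure.restrict_apply_univ]
    exact measure_Ioc_lt_top
  -- uniform bound on the semigroup on [0,T]
  obtain ⟨M, hM0, hM⟩ : ∃ M : ℝ, 0 ≤ M ∧ ∀ t ∈ Icc (0:ℝ) T, ‖𝒰 t‖ ≤ M := by
    obtain ⟨C, hC⟩ := banach_steinhaus (ι := Icc (0:ℝ) T) (g := fun i => 𝒰 i) (fun x => by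
      obtain ⟨C, hC⟩ := isCompact_Icc.exists_bound_of_continuousOn
        ((hcont x).mono Icc_subset_Ici_self)
      exact ⟨C, fun i => hC i i.2⟩)
    exact ⟨max C 0, le_max_right _ _, fun t ht => le_trans (hC ⟨t, ht⟩) (le_max_left _ _)⟩
  -- the function s ↦ B* U_{T-s}* q
  set gq : X → ℝ → U := fun q s =>
    (ContinuousLinearMap.adjoint B) ((ContinuousLinearMap.adjoint (𝒰 (T - s))) q) with hgq
  have hgq_meas : ∀ q : X, AEStronglyMeasurable (gq q) μ := by
    intro q
    refine pettis_aesm hT (gq q) fun v => ?_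
    have h1 : ContinuousOn (fun s : ℝ => 𝒰 (T - s) (B v)) (Icc 0 T) := by
      refine (hcont (B v)).comp ((continuous_const.sub continuous_id).continuousOn) ?_
      intro s hs
      simp only [mem_Ici]
      simp only [mem_Icc] at hs
      linarith [hs.2]
    have h2 : ContinuousOn (fun s : ℝ => ⟪q, 𝒰 (T - s) (B v)⟫) (Icc 0 T) :=
      (innerSL ℝ q).continuous.comp_continuousOn h1
    refine h2.congr fun s _ => ?_
    rw [hgq]
    rw [ContinuousLinearMap.adjoint_inner_left, ContinuousLinearMap.adjoint_inner_left]
  have hgq_bdd : ∀ q : X, ∀ s ∈ Ioc (0:ℝ) T, ‖gq q s‖ ≤ ‖B‖ * M * ‖q‖ := by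
    intro q s hs
    have hTs : T - s ∈ Icc (0:ℝ) T := ⟨by linarith [hs.2], by linarith [hs.1]⟩
    have hBadj : ‖(ContinuousLinearMap.adjoint B : X →L[ℝ] U)‖ = ‖B‖ :=
      LinearIsometryEquiv.norm_map ContinuousLinearMap.adjoint B
    have h2 : ‖(ContinuousLinearMap.adjoint (𝒰 (T - s)) : X →L[ℝ] X)‖ = ‖𝒰 (T - s)‖ :=
      LinearIsometryEquiv.norm_map ContinuousLinearMap.adjoint (𝒰 (T - s))
    calc ‖gq q s‖ ≤ ‖(ContinuousLinearMap.adjoint B : X →L[ℝ] U)‖ *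
        ‖(ContinuousLinearMap.adjoint (𝒰 (T - s))) q‖ := ContinuousLinearMap.le_opNorm _ _
    _ ≤ ‖B‖ * (‖𝒰 (T - s)‖ * ‖q‖) := by
        rw [hBadj]
        exact mul_le_mul_of_nonneg_left
          ((ContinuousLinearMap.le_opNorm _ _).trans (by rw [h2])) (norm_nonneg B)
    _ ≤ ‖B‖ * M * ‖q‖ := by
        rw [mul_assoc]
        refine mul_le_mul_of_nonneg_left ?_ (norm_nonneg B)
        exact mul_le_mul_of_nonneg_right (hM _ hTs) (norm_nonneg q)
  have hmem : ∀ q : X, MemLp (gq q) 2 μ := by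
    intro q
    refine MemLp.of_bound (hgq_meas q) (‖B‖ * M * ‖q‖) ?_
    rw [hμ, ae_restrict_iff' measurableSet_Ioc]
    exact ae_of_all _ (hgq_bdd q)
  -- the bounded operator Ψ : X → L²((0,T]; U), q ↦ B* U_{T-·}* q
  have htoLp_congr : ∀ (f g : ℝ → U) (hf : MemLp f 2 μ) (hg : MemLp g 2 μ), f = g →
      hf.toLp f = hg.toLp g := by
    rintro f g hf hg rfl; rfl
  set ΨL : X →ₗ[ℝ] Lp U 2 μ :=
    { toFun := fun q => (hmem q).toLp (gq q)
      map_add' := by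
        intro q q'
        show (hmem (q + q')).toLp (gq (q + q')) =
          (hmem q).toLp (gq q) + (hmem q').toLp (gq q')
        have h1 : gq (q + q') = gq q + gq q' := by
          funext s; simp [hgq, map_add]
        rw [htoLp_congr _ _ (hmem (q + q')) ((hmem q).add (hmem q')) h1,
          MemLp.toLp_add (hmem q) (hmem q')]
      map_smul' := by
        intro c q
        show (hmem (c • q)).toLp (gq (c • q)) = c • ((hmem q).toLp (gq q))
        have h1 : gq (c • q) = c • gq q := by
          funext s; simp [hgq, _root_.map_smul]
        rw [htoLp_congr _ _ (hmem (c • q)) ((hmem q).const_smul c) h1,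
          MemLp.toLp_const_smul c (hmem q)] } with hΨL
  have hΨLapp : ∀ q, ΨL q = (hmem q).toLp (gq q) := fun _ => rfl
  have hΨbound : ∀ q : X, ‖ΨL q‖ ≤ ((μ univ) ^ ((2:ℝ)⁻¹)).toReal * (‖B‖ * M) * ‖q‖ := by
    intro q
    rw [hΨLapp, Lp.norm_toLp]
    have h1 : eLpNorm (gq q) 2 μ ≤ (μ univ) ^ ((2:ENNReal).toReal)⁻¹ *
        ENNReal.ofReal (‖B‖ * M * ‖q‖) := by
      refine eLpNorm_le_of_ae_bound ?_
      rw [hμ, ae_restrict_iff' measurableSet_Ioc]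
      exact ae_of_all _ (hgq_bdd q)
    have h2 : ((2:ENNReal).toReal)⁻¹ = (2:ℝ)⁻¹ := by norm_num
    rw [h2] at h1
    have hfin : (μ univ) ^ ((2:ℝ)⁻¹) * ENNReal.ofReal (‖B‖ * M * ‖q‖) ≠ ⊤ := by
      refine ENNReal.mul_ne_top ?_ ENNReal.ofReal_ne_top
      exact ENNReal.rpow_ne_top_of_nonneg (by norm_num) (measure_ne_top μ univ)
    calc (eLpNorm (gq q) 2 μ).toReal
        ≤ ((μ univ) ^ ((2:ℝ)⁻¹) * ENNReal.ofReal (‖B‖ * M * ‖q‖)).toReal :=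
          ENNReal.toReal_mono hfin h1
      _ = ((μ univ) ^ ((2:ℝ)⁻¹)).toReal * (‖B‖ * M * ‖q‖) := by
          rw [ENNReal.toReal_mul, ENNReal.toReal_ofReal (by positivity)]
      _ = ((μ univ) ^ ((2:ℝ)⁻¹)).toReal * (‖B‖ * M) * ‖q‖ := by ring
  set Ψ : X →L[ℝ] Lp U 2 μ := ΨL.mkContinuous _ hΨbound with hΨ
  have hΨapp : ∀ q, Ψ q = (hmem q).toLp (gq q) := fun _ => rfl
  -- ‖Ψ q‖² is the observability integral
  have hΨsq : ∀ q : X, ‖Ψ q‖ ^ 2 = ∫ s, ‖gq q s‖ ^ 2 ∂μ := by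
    intro q
    have h1 : ⟪Ψ q, Ψ q⟫ = ∫ s, ⟪(Ψ q : ℝ → U) s, (Ψ q : ℝ → U) s⟫ ∂μ :=
      MeasureTheory.L2.inner_def (Ψ q) (Ψ q)
    have h2 : ∫ s, ⟪(Ψ q : ℝ → U) s, (Ψ q : ℝ → U) s⟫ ∂μ = ∫ s, ‖gq q s‖ ^ 2 ∂μ := by
      refine integral_congr_ae ?_
      filter_upwards [(hmem q).coeFn_toLp] with s hs
      rw [hΨapp] at *
      rw [hs, real_inner_self_eq_norm_sq]
    rw [← real_inner_self_eq_norm_sq, h1, h2]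
  -- extended observability inequality
  have hobs' : ∀ q : X, K * ‖(ContinuousLinearMap.adjoint (𝒰 T)) q‖ ≤ ‖Ψ q‖ := by
    have hclosed : IsClosed {q : X | K * ‖(ContinuousLinearMap.adjoint (𝒰 T)) q‖ ≤ ‖Ψ q‖} :=
      isClosed_le (continuous_const.mul
        ((ContinuousLinearMap.adjoint (𝒰 T) : X →L[ℝ] X).continuous.norm))
        (Ψ.continuous.norm)
    have hsub : (D : Set X) ⊆ {q : X | K * ‖(ContinuousLinearMap.adjoint (𝒰 T)) q‖ ≤ ‖Ψ q‖} := by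
      intro q hq
      have h1 := hobs q hq
      have h2 : (∫ t in (0:ℝ)..T,
          ‖(ContinuousLinearMap.adjoint B) ((ContinuousLinearMap.adjoint (𝒰 t)) q)‖ ^ 2)
          = ‖Ψ q‖ ^ 2 := by
        rw [hΨsq]
        have h3 := intervalIntegral.integral_comp_sub_left (a := (0:ℝ)) (b := T)
          (fun t => ‖(ContinuousLinearMap.adjoint B)
            ((ContinuousLinearMap.adjoint (𝒰 t)) q)‖ ^ 2) T
        simp only [sub_zero, sub_self] at h3
        rw [← h3, intervalIntegral.integral_of_le hT.le]
      rw [h2] at h1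
      have h4 : (K * ‖(ContinuousLinearMap.adjoint (𝒰 T)) q‖) ^ 2 ≤ ‖Ψ q‖ ^ 2 := by
        rw [mul_pow]; exact h1
      have h5 := Real.sqrt_le_sqrt h4
      rwa [Real.sqrt_sq (by positivity), Real.sqrt_sq (norm_nonneg _)] at h5
    intro q
    have : (univ : Set X) ⊆ {q : X | K * ‖(ContinuousLinearMap.adjoint (𝒰 T)) q‖ ≤ ‖Ψ q‖} := by
      rw [← hD.closure_eq]
      exact closure_minimal hsub hclosed
    exact this (mem_univ q)
  intro y₀
  set ψ : X →ₗ[ℝ] Lp U 2 μ := (Ψ : X →L[ℝ] Lp U 2 μ).toLinearMap with hψdef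
  have hψapp : ∀ q, ψ q = Ψ q := fun _ => rfl
  set cL : X →ₗ[ℝ] ℝ := ((innerSL ℝ ((𝒰 T) y₀) : X →L[ℝ] ℝ) : X →ₗ[ℝ] ℝ) with hcLdef
  have hcLapp : ∀ q, cL q = ⟪(𝒰 T) y₀, q⟫ := fun _ => rfl
  have hflip : ∀ q : X, ⟪(𝒰 T) y₀, q⟫ = ⟪y₀, (ContinuousLinearMap.adjoint (𝒰 T)) q⟫ := by
    intro q
    rw [real_inner_comm, ← ContinuousLinearMap.adjoint_inner_left (𝒰 T) y₀ q, real_inner_comm]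
  have hSq : ∀ q, ‖(ContinuousLinearMap.adjoint (𝒰 T)) q‖ ≤ K⁻¹ * ‖Ψ q‖ := by
    intro q
    have h := hobs' q
    have h2 : ‖(ContinuousLinearMap.adjoint (𝒰 T)) q‖ =
        K⁻¹ * (K * ‖(ContinuousLinearMap.adjoint (𝒰 T)) q‖) := by
      field_simp
    rw [h2]
    exact mul_le_mul_of_nonneg_left h (inv_nonneg.mpr hK.le)
  have hker : LinearMap.ker ψ ≤ LinearMap.ker cL := by
    intro q hq
    rw [LinearMap.mem_ker] at hq ⊢
    have h0 : ‖Ψ q‖ = 0 := by rw [← hψapp, hq, norm_zero]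
    have h1 : (ContinuousLinearMap.adjoint (𝒰 T)) q = 0 := by
      have h2 := hobs' q
      rw [h0] at h2
      have h3 : ‖(ContinuousLinearMap.adjoint (𝒰 T)) q‖ ≤ 0 := by
        rwa [← mul_zero K, mul_le_mul_iff_right₀ hK] at h2
      exact norm_le_zero_iff.mp h3
    rw [hcLapp, hflip, h1, inner_zero_right]
  set ℓ₁ : ↥(LinearMap.range ψ) →ₗ[ℝ] ℝ :=
    (Submodule.liftQ (LinearMap.ker ψ) cL hker).comp
      (ψ.quotKerEquivRange.symm : ↥(LinearMap.range ψ) →ₗ[ℝ] (X ⧸ LinearMap.ker ψ)) with hℓ₁def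
  have hℓ₁ : ∀ (q : X) (h : ψ q ∈ LinearMap.range ψ), ℓ₁ ⟨ψ q, h⟩ = ⟪(𝒰 T) y₀, q⟫ := by
    intro q h
    have h1 : ψ.quotKerEquivRange (Submodule.Quotient.mk q) = ⟨ψ q, h⟩ :=
      Subtype.ext (ψ.quotKerEquivRange_apply_mk q)
    have h2 : ψ.quotKerEquivRange.symm ⟨ψ q, h⟩ = Submodule.Quotient.mk q := by
      rw [← h1, LinearEquiv.symm_apply_apply]
    show (Submodule.liftQ (LinearMap.ker ψ) cL hker) (ψ.quotKerEquivRange.symm ⟨ψ q, h⟩) = _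
    rw [h2, Submodule.liftQ_apply, hcLapp]
  have hℓ₁bound : ∀ y : ↥(LinearMap.range ψ), ‖ℓ₁ y‖ ≤ (K⁻¹ * ‖y₀‖) * ‖y‖ := by
    rintro ⟨y, hy⟩
    obtain ⟨q, rfl⟩ := hy
    rw [hℓ₁ q (LinearMap.mem_range_self ψ q)]
    have h1 : ‖(⟨ψ q, LinearMap.mem_range_self ψ q⟩ : ↥(LinearMap.range ψ))‖ = ‖Ψ q‖ := rfl
    rw [h1, hflip, Real.norm_eq_abs]
    calc |⟪y₀, (ContinuousLinearMap.adjoint (𝒰 T)) q⟫|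
        ≤ ‖y₀‖ * ‖(ContinuousLinearMap.adjoint (𝒰 T)) q‖ := abs_real_inner_le_norm _ _
      _ ≤ ‖y₀‖ * (K⁻¹ * ‖Ψ q‖) :=
          mul_le_mul_of_nonneg_left (hSq q) (norm_nonneg y₀)
      _ = (K⁻¹ * ‖y₀‖) * ‖Ψ q‖ := by ring
  set ℓ₂ : ↥(LinearMap.range ψ) →L[ℝ] ℝ := ℓ₁.mkContinuous _ hℓ₁bound with hℓ₂def
  obtain ⟨gext, hgext, -⟩ := exists_extension_norm_eq (LinearMap.range ψ) ℓ₂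
  set u' : Lp U 2 μ := (InnerProductSpace.toDual ℝ (Lp U 2 μ)).symm gext with hu'def
  have hu' : ∀ q : X, ⟪u', Ψ q⟫ = ⟪(𝒰 T) y₀, q⟫ := by
    intro q
    rw [hu'def, InnerProductSpace.toDual_symm_apply]
    have h1 := hgext ⟨ψ q, LinearMap.mem_range_self ψ q⟩
    have h2 : ((⟨ψ q, LinearMap.mem_range_self ψ q⟩ : ↥(LinearMap.range ψ)) : Lp U 2 μ)
        = Ψ q := rfl
    rw [h2] at h1
    rw [h1]
    show ℓ₁ _ = _
    rw [hℓ₁ q (LinearMap.mem_range_self ψ q)]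
  set u₀ : Lp U 2 μ := -u' with hu₀def
  have hu₀ : ∀ q : X, ⟪u₀, Ψ q⟫ = -⟪(𝒰 T) y₀, q⟫ := fun q => by
    rw [hu₀def, inner_neg_left, hu' q]
  -- measurability of the state integrand
  have hum : AEStronglyMeasurable (⇑u₀ : ℝ → U) μ := (Lp.memLp u₀).1
  have hsimple : ∀ (φ : SimpleFunc ℝ U),
      AEStronglyMeasurable (fun s => (𝒰 (T - s)) (B (φ s))) μ := by
    intro φ
    refine SimpleFunc.induction ?_ ?_ φ
    · intro c A hA
      have heq : (fun x => (𝒰 (T - x)) (B ((SimpleFunc.piecewise A hA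
          (SimpleFunc.const ℝ c) (SimpleFunc.const ℝ 0)) x)))
          = A.indicator (fun x => (𝒰 (T - x)) (B c)) := by
        funext x
        rw [SimpleFunc.piecewise_apply]
        by_cases hx : x ∈ A
        · simp [hx]
        · simp [hx]
      rw [heq]
      refine AEStronglyMeasurable.indicator ?_ hA
      have hcont2 : ContinuousOn (fun x : ℝ => (𝒰 (T - x)) (B c)) (Ioc 0 T) := by
        refine ((hcont (B c)).comp ((continuous_const.sub continuous_id).continuousOn) ?_).mono
          (subset_refl _)
        intro x hx
        simp only [mem_Ici, id_eq, Pi.sub_apply]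
        simp only [mem_Ioc] at hx
        linarith [hx.2]
      exact hcont2.aestronglyMeasurable measurableSet_Ioc
    · intro f g _ hf hg
      have heq : (fun s => (𝒰 (T - s)) (B ((f + g) s)))
          = fun s => (𝒰 (T - s)) (B (f s)) + (𝒰 (T - s)) (B (g s)) := by
        funext s
        simp [map_add]
      rw [heq]
      exact hf.add hg
  have key_meas : AEStronglyMeasurable (fun s => (𝒰 (T - s)) (B ((u₀ : ℝ → U) s))) μ := by
    have hmsm : StronglyMeasurable (hum.mk ⇑u₀) := hum.stronglyMeasurable_mk
    have haem : (⇑u₀ : ℝ → U) =ᵐ[μ] hum.mk ⇑u₀ := hum.ae_eq_mk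
    have h1 : ∀ n : ℕ, AEStronglyMeasurable
        (fun s => (𝒰 (T - s)) (B ((hmsm.approx n) s))) μ := fun n => hsimple _
    have h2 : ∀ s, Filter.Tendsto (fun n => (𝒰 (T - s)) (B ((hmsm.approx n) s)))
        atTop (𝓝 ((𝒰 (T - s)) (B (hum.mk ⇑u₀ s)))) := fun s =>
      (((𝒰 (T - s)).continuous.comp B.continuous).tendsto _).comp (hmsm.tendsto_approx s)
    have h3 : AEStronglyMeasurable (fun s => (𝒰 (T - s)) (B (hum.mk ⇑u₀ s))) μ :=
      aestronglyMeasurable_of_tendsto_ae atTop h1 (ae_of_all _ h2)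
    refine h3.congr ?_
    filter_upwards [haem] with s hs
    rw [hs]
  have hFint : Integrable (fun s => (𝒰 (T - s)) (B ((u₀ : ℝ → U) s))) μ := by
    have hint : Integrable (fun s => M * (‖B‖ * ‖(u₀ : ℝ → U) s‖)) μ :=
      (((Lp.memLp u₀).integrable one_le_two).norm.const_mul ‖B‖).const_mul M
    refine hint.mono' key_meas ?_
    refine (ae_restrict_iff' measurableSet_Ioc).mpr ?_
    refine ae_of_all _ fun s hs => ?_
    have hTs : T - s ∈ Icc (0:ℝ) T := ⟨by linarith [hs.2], by linarith [hs.1]⟩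
    calc ‖(𝒰 (T - s)) (B ((u₀ : ℝ → U) s))‖
        ≤ ‖𝒰 (T - s)‖ * ‖B ((u₀ : ℝ → U) s)‖ := ContinuousLinearMap.le_opNorm _ _
      _ ≤ M * (‖B‖ * ‖(u₀ : ℝ → U) s‖) := by
          refine mul_le_mul (hM _ hTs) (ContinuousLinearMap.le_opNorm _ _)
            (norm_nonneg _) hM0
  have hII : IntervalIntegrable (fun s => (𝒰 (T - s)) (B ((u₀ : ℝ → U) s))) volume 0 T := by
    rw [intervalIntegrable_iff_integrableOn_Ioc_of_le hT.le]
    exact hFint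
  have hkey : ∀ q : X,
      ⟪(∫ s in (0:ℝ)..T, (𝒰 (T - s)) (B ((u₀ : ℝ → U) s))), q⟫ = ⟪u₀, Ψ q⟫ := by
    intro q
    rw [intervalIntegral.integral_of_le hT.le]
    have h1 : ⟪(∫ s in Ioc (0:ℝ) T, (𝒰 (T - s)) (B ((u₀ : ℝ → U) s)) ∂volume), q⟫
        = ∫ s, ⟪q, (𝒰 (T - s)) (B ((u₀ : ℝ → U) s))⟫ ∂μ := by
      rw [real_inner_comm]
      exact (integral_inner hFint q).symm
    rw [h1]
    have h2 : ⟪u₀, Ψ q⟫ = ∫ s, ⟪(u₀ : ℝ → U) s, ((Ψ q : Lp U 2 μ) : ℝ → U) s⟫ ∂μ :=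
      MeasureTheory.L2.inner_def u₀ (Ψ q)
    rw [h2]
    refine integral_congr_ae ?_
    have hcoe : ((Ψ q : Lp U 2 μ) : ℝ → U) =ᵐ[μ] gq q := (hmem q).coeFn_toLp
    filter_upwards [hcoe] with s hs
    rw [hs]
    rw [← ContinuousLinearMap.adjoint_inner_left (𝒰 (T - s)) (B ((u₀ : ℝ → U) s)) q,
      ← ContinuousLinearMap.adjoint_inner_left B ((u₀ : ℝ → U) s)
        ((ContinuousLinearMap.adjoint (𝒰 (T - s))) q),
      real_inner_comm]
  refine ⟨(⇑u₀ : ℝ → U), Lp.memLp u₀, hII, ?_⟩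
  refine ext_inner_right ℝ fun v => ?_
  rw [inner_add_left, hkey v, hu₀ v, inner_zero_left]
  exact add_neg_cancel _
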